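/- Let G be a finite simple graph and (i,j) ∈ E. Let ζ_ij be the minimum cardinality of a vertex cover of the reduced graph G^{(i,j)} and let δ̄(i,j) be the minimum cardinality of a vertex cover S of G with |S ∩ {i,j}| = 1. Then ζ_ij + |Δ_ij| + 1 = δ̄(i,j). -/
import Mathlib


variable {V : Type*} [Fintype V] [DecidableEq V]

/-- `S` is a vertex cover of `G`: every edge has at least one endpoint in `S`. -/
def IsVertexCover (G : SimpleGraph V) (S : Finset V) : Prop :=
  ∀ ⦃a b : V⦄, G.Adj a b → a ∈ S ∨ b ∈ S

/-- `Δ_ij`: the common neighbours of `i` and `j`. -/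
def DeltaSet (G : SimpleGraph V) [DecidableRel G.Adj] (i j : V) : Finset V :=
  Finset.univ.filter fun k => G.Adj i k ∧ G.Adj j k

/-- `D_i`: the neighbours of `i` other than `j` that are not common neighbours
of `i` and `j`.  (`D_j` is `DSide G j i`.) -/
def DSide (G : SimpleGraph V) [DecidableRel G.Adj] (i j : V) : Finset V :=
  Finset.univ.filter fun s => G.Adj i s ∧ s ≠ j ∧ s ∉ DeltaSet G i j

/-- The removed vertex set `{i, j} ∪ Δ_ij`. -/
def RemovedSet (G : SimpleGraph V) [DecidableRel G.Adj] (i j : V) : Finset V :=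
  insert i (insert j (DeltaSet G i j))

/-- The reduced graph `G^{(i,j)}`: vertices outside `{i,j} ∪ Δ_ij`, with the edges of
`G` between such vertices together with all pairs `(s,t)`, `s ∈ D_i`, `t ∈ D_j`. -/
def ReducedGraph (G : SimpleGraph V) [DecidableRel G.Adj] (i j : V) : SimpleGraph V :=
  SimpleGraph.fromRel fun a b =>
    a ∉ RemovedSet G i j ∧ b ∉ RemovedSet G i j ∧
      (G.Adj a b ∨ (a ∈ DSide G i j ∧ b ∈ DSide G j i))

/-- `R` is a vertex cover of the reduced graph `G^{(i,j)}`: it is a subset of the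
vertex set of `G^{(i,j)}` and covers all its edges. -/
def IsReducedVC (G : SimpleGraph V) [DecidableRel G.Adj] (i j : V) (R : Finset V) :
    Prop :=
  (∀ v ∈ R, v ∉ RemovedSet G i j) ∧
    ∀ ⦃a b : V⦄, (ReducedGraph G i j).Adj a b → a ∈ R ∨ b ∈ R

/-- `R* = R ∪ Δ_ij ∪ {j}` if `D_i ⊆ R`, and `R* = R ∪ Δ_ij ∪ {i}` otherwise. -/
def RStar (G : SimpleGraph V) [DecidableRel G.Adj] (i j : V) (R : Finset V) :
    Finset V :=
  if DSide G i j ⊆ R then R ∪ DeltaSet G i j ∪ {j} else R ∪ DeltaSet G i j ∪ {i}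

/-- `ζ_ij`: the minimum cardinality of a vertex cover of the reduced graph
`G^{(i,j)}`. -/
noncomputable def zeta (G : SimpleGraph V) [DecidableRel G.Adj] (i j : V) : ℕ :=
  sInf {n : ℕ | ∃ R : Finset V, IsReducedVC G i j R ∧ R.card = n}

/-- `δ̄(i,j)`: the minimum cardinality of a vertex cover `S` of `G` with
`|S ∩ {i,j}| = 1`. -/
noncomputable def minRestrictedVC (G : SimpleGraph V) (i j : V) : ℕ :=
  sInf {n : ℕ | ∃ S : Finset V,
    (IsVertexCover G S ∧ (({i, j} : Finset V) ∩ S).card = 1) ∧ S.card = n}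

section Aux

variable (G : SimpleGraph V) [DecidableRel G.Adj] (i j : V)

lemma mem_DeltaSet' {k : V} : k ∈ DeltaSet G i j ↔ G.Adj i k ∧ G.Adj j k := by
  simp [DeltaSet]

lemma mem_DSide' {s : V} :
    s ∈ DSide G i j ↔ G.Adj i s ∧ s ≠ j ∧ s ∉ DeltaSet G i j := by
  simp [DSide]

lemma mem_RemovedSet' {v : V} :
    v ∈ RemovedSet G i j ↔ v = i ∨ v = j ∨ (G.Adj i v ∧ G.Adj j v) := by
  simp [RemovedSet, mem_DeltaSet']

variable {G i j}

lemma i_notMem_Delta : i ∉ DeltaSet G i j := by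
  simp [mem_DeltaSet', G.irrefl]

lemma j_notMem_Delta : j ∉ DeltaSet G i j := by
  simp [mem_DeltaSet', G.irrefl]

lemma exists_S_of_reducedVC (hij : G.Adj i j) (R : Finset V)
    (hR : IsReducedVC G i j R) :
    ∃ S : Finset V, (IsVertexCover G S ∧ (({i, j} : Finset V) ∩ S).card = 1) ∧
      S.card = R.card + (DeltaSet G i j).card + 1 := by
  obtain ⟨hR1, hR2⟩ := hR
  have hiR : i ∉ R := fun h => (hR1 i h) (by simp [mem_RemovedSet'])
  have hjR : j ∉ R := fun h => (hR1 j h) (by simp [mem_RemovedSet'])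
  have hRD : Disjoint R (DeltaSet G i j) := by
    rw [Finset.disjoint_left]
    intro v hv hvD
    exact hR1 v hv (by simp [mem_RemovedSet', (mem_DeltaSet' G i j).1 hvD])
  by_cases hD : DSide G i j ⊆ R
  · -- S = R ∪ Δ ∪ {j}
    refine ⟨R ∪ DeltaSet G i j ∪ {j}, ⟨?_, ?_⟩, ?_⟩
    · intro a b hab
      by_cases ha : a ∈ R ∪ DeltaSet G i j ∪ {j}
      · exact Or.inl ha
      by_cases hb : b ∈ R ∪ DeltaSet G i j ∪ {j}
      · exact Or.inr hb
      exfalso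
      simp only [Finset.mem_union, Finset.mem_singleton, not_or] at ha hb
      obtain ⟨⟨haR, haD⟩, haj⟩ := ha
      obtain ⟨⟨hbR, hbD⟩, hbj⟩ := hb
      by_cases hai : a = i
      · subst hai
        have : b ∈ DSide G a j := (mem_DSide' G a j).2 ⟨hab, hbj, hbD⟩
        exact hbR (hD this)
      by_cases hbi : b = i
      · subst hbi
        have : a ∈ DSide G b j := (mem_DSide' G b j).2 ⟨hab.symm, haj, haD⟩
        exact haR (hD this)
      have haRem : a ∉ RemovedSet G i j := by
        rw [mem_RemovedSet']; push_neg
        refine ⟨hai, haj, fun h1 h2 => haD ((mem_DeltaSet' G i j).2 ⟨h1, h2⟩)⟩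
      have hbRem : b ∉ RemovedSet G i j := by
        rw [mem_RemovedSet']; push_neg
        refine ⟨hbi, hbj, fun h1 h2 => hbD ((mem_DeltaSet' G i j).2 ⟨h1, h2⟩)⟩
      have hred : (ReducedGraph G i j).Adj a b := by
        rw [ReducedGraph, SimpleGraph.fromRel_adj]
        exact ⟨hab.ne, Or.inl ⟨haRem, hbRem, Or.inl hab⟩⟩
      rcases hR2 hred with h | h
      · exact haR h
      · exact hbR h
    · -- intersection card
      have : ({i, j} : Finset V) ∩ (R ∪ DeltaSet G i j ∪ {j}) = {j} := by
        ext x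
        simp only [Finset.mem_inter, Finset.mem_insert, Finset.mem_union,
          Finset.mem_singleton]
        constructor
        · rintro ⟨hx1 | hx1, hx2⟩
          · subst hx1
            rcases hx2 with (h | h) | h
            · exact absurd h hiR
            · exact absurd h i_notMem_Delta
            · exact h
          · exact hx1
        · rintro rfl
          exact ⟨Or.inr rfl, Or.inr rfl⟩
      rw [this, Finset.card_singleton]
    · have h1 : Disjoint (R ∪ DeltaSet G i j) ({j} : Finset V) := by
        rw [Finset.disjoint_right]
        intro v hv
        rw [Finset.mem_singleton] at hv; subst hv
        simp only [Finset.mem_union, not_or]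
        exact ⟨hjR, j_notMem_Delta⟩
      rw [Finset.card_union_of_disjoint h1, Finset.card_union_of_disjoint hRD,
        Finset.card_singleton]
  · -- S = R ∪ Δ ∪ {i}
    obtain ⟨s, hsD, hsR⟩ := Finset.not_subset.1 hD
    obtain ⟨hsi, hsj, hsDelta⟩ := (mem_DSide' G i j).1 hsD
    have hsRem : s ∉ RemovedSet G i j := by
      rw [mem_RemovedSet']; push_neg
      refine ⟨fun h => G.irrefl (h ▸ hsi), hsj,
        fun h1 h2 => hsDelta ((mem_DeltaSet' G i j).2 ⟨h1, h2⟩)⟩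
    have hsnj : ¬ G.Adj j s := fun h => hsDelta ((mem_DeltaSet' G i j).2 ⟨hsi, h⟩)
    refine ⟨R ∪ DeltaSet G i j ∪ {i}, ⟨?_, ?_⟩, ?_⟩
    · intro a b hab
      by_cases ha : a ∈ R ∪ DeltaSet G i j ∪ {i}
      · exact Or.inl ha
      by_cases hb : b ∈ R ∪ DeltaSet G i j ∪ {i}
      · exact Or.inr hb
      exfalso
      simp only [Finset.mem_union, Finset.mem_singleton, not_or] at ha hb
      obtain ⟨⟨haR, haD⟩, hai⟩ := ha
      obtain ⟨⟨hbR, hbD⟩, hbi⟩ := hb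
      by_cases haj : a = j
      · subst haj
        have hbDj : b ∈ DSide G a i := (mem_DSide' G a i).2
          ⟨hab, hbi, fun h => hbD (by
            obtain ⟨h1, h2⟩ := (mem_DeltaSet' G a i).1 h
            exact (mem_DeltaSet' G i a).2 ⟨h2, h1⟩)⟩
        have hbRem : b ∉ RemovedSet G i a := by
          rw [mem_RemovedSet']; push_neg
          exact ⟨hbi, hab.ne', fun h1 h2 => hbD ((mem_DeltaSet' G i a).2 ⟨h1, h2⟩)⟩
        have hsb : s ≠ b := by
          rintro rfl
          exact hsnj hab
        have hred : (ReducedGraph G i a).Adj s b := by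
          rw [ReducedGraph, SimpleGraph.fromRel_adj]
          exact ⟨hsb, Or.inl ⟨hsRem, hbRem, Or.inr ⟨hsD, hbDj⟩⟩⟩
        rcases hR2 hred with h | h
        · exact hsR h
        · exact hbR h
      by_cases hbj : b = j
      · subst hbj
        have haDj : a ∈ DSide G b i := (mem_DSide' G b i).2
          ⟨hab.symm, hai, fun h => haD (by
            obtain ⟨h1, h2⟩ := (mem_DeltaSet' G b i).1 h
            exact (mem_DeltaSet' G i b).2 ⟨h2, h1⟩)⟩
        have haRem : a ∉ RemovedSet G i b := by
          rw [mem_RemovedSet']; push_neg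
          exact ⟨hai, hab.ne, fun h1 h2 => haD ((mem_DeltaSet' G i b).2 ⟨h1, h2⟩)⟩
        have hsa : s ≠ a := by
          rintro rfl
          exact hsnj hab.symm
        have hred : (ReducedGraph G i b).Adj s a := by
          rw [ReducedGraph, SimpleGraph.fromRel_adj]
          exact ⟨hsa, Or.inl ⟨hsRem, haRem, Or.inr ⟨hsD, haDj⟩⟩⟩
        rcases hR2 hred with h | h
        · exact hsR h
        · exact haR h
      have haRem : a ∉ RemovedSet G i j := by
        rw [mem_RemovedSet']; push_neg
        exact ⟨hai, haj, fun h1 h2 => haD ((mem_DeltaSet' G i j).2 ⟨h1, h2⟩)⟩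
      have hbRem : b ∉ RemovedSet G i j := by
        rw [mem_RemovedSet']; push_neg
        exact ⟨hbi, hbj, fun h1 h2 => hbD ((mem_DeltaSet' G i j).2 ⟨h1, h2⟩)⟩
      have hred : (ReducedGraph G i j).Adj a b := by
        rw [ReducedGraph, SimpleGraph.fromRel_adj]
        exact ⟨hab.ne, Or.inl ⟨haRem, hbRem, Or.inl hab⟩⟩
      rcases hR2 hred with h | h
      · exact haR h
      · exact hbR h
    · have : ({i, j} : Finset V) ∩ (R ∪ DeltaSet G i j ∪ {i}) = {i} := by
        ext x
        simp only [Finset.mem_inter, Finset.mem_insert, Finset.mem_union,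
          Finset.mem_singleton]
        constructor
        · rintro ⟨hx1 | hx1, hx2⟩
          · exact hx1
          · subst hx1
            rcases hx2 with (h | h) | h
            · exact absurd h hjR
            · exact absurd h j_notMem_Delta
            · exact h
        · rintro rfl
          exact ⟨Or.inl rfl, Or.inr rfl⟩
      rw [this, Finset.card_singleton]
    · have h1 : Disjoint (R ∪ DeltaSet G i j) ({i} : Finset V) := by
        rw [Finset.disjoint_right]
        intro v hv
        rw [Finset.mem_singleton] at hv; subst hv
        simp only [Finset.mem_union, not_or]
        exact ⟨hiR, i_notMem_Delta⟩
      rw [Finset.card_union_of_disjoint h1, Finset.card_union_of_disjoint hRD,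
        Finset.card_singleton]

lemma exists_R_of_restrictedVC (hij : G.Adj i j) (S : Finset V)
    (hS : IsVertexCover G S) (hcard : (({i, j} : Finset V) ∩ S).card = 1) :
    ∃ R : Finset V, IsReducedVC G i j R ∧
      R.card + (DeltaSet G i j).card + 1 ≤ S.card := by
  have hne : i ≠ j := hij.ne
  -- exactly one of i, j in S
  have hone : (i ∈ S ∧ j ∉ S) ∨ (i ∉ S ∧ j ∈ S) := by
    by_cases hiS : i ∈ S <;> by_cases hjS : j ∈ S
    · exfalso
      have : ({i, j} : Finset V) ∩ S = {i, j} := by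
        ext x
        simp only [Finset.mem_inter, Finset.mem_insert, Finset.mem_singleton]
        constructor
        · exact fun h => h.1
        · rintro (rfl | rfl)
          · exact ⟨Or.inl rfl, hiS⟩
          · exact ⟨Or.inr rfl, hjS⟩
      rw [this, Finset.card_insert_of_notMem (by simpa using hne),
        Finset.card_singleton] at hcard
      omega
    · exact Or.inl ⟨hiS, hjS⟩
    · exact Or.inr ⟨hiS, hjS⟩
    · exfalso
      have : ({i, j} : Finset V) ∩ S = ∅ := by
        ext x
        simp only [Finset.mem_inter, Finset.mem_insert, Finset.mem_singleton,
          Finset.notMem_empty, iff_false, not_and]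
        rintro (rfl | rfl) <;> assumption
      rw [this] at hcard
      simp at hcard
  -- the common part of the argument
  have hDS : DeltaSet G i j ⊆ S := by
    intro k hk
    obtain ⟨h1, h2⟩ := (mem_DeltaSet' G i j).1 hk
    rcases hone with ⟨hiS, hjS⟩ | ⟨hiS, hjS⟩
    · rcases hS h2 with h | h
      · exact absurd h hjS
      · exact h
    · rcases hS h1 with h | h
      · exact absurd h hiS
      · exact h
  set R : Finset V := S \ RemovedSet G i j with hRdef
  have hRsub : ∀ v ∈ R, v ∉ RemovedSet G i j := by
    intro v hv
    exact (Finset.mem_sdiff.1 hv).2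
  refine ⟨R, ⟨hRsub, ?_⟩, ?_⟩
  · intro a b hab
    rw [ReducedGraph, SimpleGraph.fromRel_adj] at hab
    obtain ⟨hneab, hab⟩ := hab
    have key : ∀ x y : V, x ∉ RemovedSet G i j → y ∉ RemovedSet G i j →
        (G.Adj x y ∨ (x ∈ DSide G i j ∧ y ∈ DSide G j i)) → x ∈ R ∨ y ∈ R := by
      intro x y hx hy h
      rcases h with h | ⟨hx', hy'⟩
      · rcases hS h with h' | h'
        · exact Or.inl (Finset.mem_sdiff.2 ⟨h', hx⟩)
        · exact Or.inr (Finset.mem_sdiff.2 ⟨h', hy⟩)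
      · rcases hone with ⟨hiS, hjS⟩ | ⟨hiS, hjS⟩
        · -- j ∉ S, so neighbours of j are in S; y ∈ D_j
          obtain ⟨hy1, _, _⟩ := (mem_DSide' G j i).1 hy'
          rcases hS hy1 with h' | h'
          · exact absurd h' hjS
          · exact Or.inr (Finset.mem_sdiff.2 ⟨h', hy⟩)
        · obtain ⟨hx1, _, _⟩ := (mem_DSide' G i j).1 hx'
          rcases hS hx1 with h' | h'
          · exact absurd h' hiS
          · exact Or.inl (Finset.mem_sdiff.2 ⟨h', hx⟩)
    rcases hab with ⟨hx, hy, h⟩ | ⟨hx, hy, h⟩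
    · exact key a b hx hy h
    · exact (key b a hx hy h).symm
  · -- cardinality
    have h1 : R = S \ (S ∩ RemovedSet G i j) := by
      rw [Finset.sdiff_inter_self_left]
    have h2 : R.card + (S ∩ RemovedSet G i j).card = S.card := by
      rw [h1]
      exact Finset.card_sdiff_add_card_eq_card Finset.inter_subset_left
    have h3 : (DeltaSet G i j).card + 1 ≤ (S ∩ RemovedSet G i j).card := by
      rcases hone with ⟨hiS, hjS⟩ | ⟨hiS, hjS⟩
      · have hsub : insert i (DeltaSet G i j) ⊆ S ∩ RemovedSet G i j := by
          intro x hx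
          rcases Finset.mem_insert.1 hx with rfl | hx
          · exact Finset.mem_inter.2 ⟨hiS, by simp [mem_RemovedSet']⟩
          · exact Finset.mem_inter.2 ⟨hDS hx, by
              simp [mem_RemovedSet', (mem_DeltaSet' G i j).1 hx]⟩
        have := Finset.card_le_card hsub
        rw [Finset.card_insert_of_notMem i_notMem_Delta] at this
        omega
      · have hsub : insert j (DeltaSet G i j) ⊆ S ∩ RemovedSet G i j := by
          intro x hx
          rcases Finset.mem_insert.1 hx with rfl | hx
          · exact Finset.mem_inter.2 ⟨hjS, by simp [mem_RemovedSet']⟩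
          · exact Finset.mem_inter.2 ⟨hDS hx, by
              simp [mem_RemovedSet', (mem_DeltaSet' G i j).1 hx]⟩
        have := Finset.card_le_card hsub
        rw [Finset.card_insert_of_notMem j_notMem_Delta] at this
        omega
    omega

end Aux

/-- For any edge `(i,j)` of `G`: `ζ_ij + |Δ_ij| + 1 = δ̄(i,j)`. -/
theorem zeta_add_delta_card_add_one (G : SimpleGraph V) [DecidableRel G.Adj]
    (i j : V) (hij : G.Adj i j) :
    zeta G i j + (DeltaSet G i j).card + 1 = minRestrictedVC G i j := by
  have hAne : {n : ℕ | ∃ R : Finset V, IsReducedVC G i j R ∧ R.card = n}.Nonempty := by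
    refine ⟨(Finset.univ \ RemovedSet G i j).card,
      Finset.univ \ RemovedSet G i j, ⟨?_, ?_⟩, rfl⟩
    · intro v hv; exact (Finset.mem_sdiff.1 hv).2
    · intro a b hab
      rw [ReducedGraph, SimpleGraph.fromRel_adj] at hab
      rcases hab.2 with ⟨ha, _, _⟩ | ⟨_, ha, _⟩ <;>
        exact Or.inl (Finset.mem_sdiff.2 ⟨Finset.mem_univ _, ha⟩)
  have hBne : {n : ℕ | ∃ S : Finset V,
      (IsVertexCover G S ∧ (({i, j} : Finset V) ∩ S).card = 1) ∧ S.card = n}.Nonempty := by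
    refine ⟨(Finset.univ.erase j).card, Finset.univ.erase j, ⟨?_, ?_⟩, rfl⟩
    · intro a b hab
      by_cases ha : a = j
      · subst ha
        exact Or.inr (Finset.mem_erase.2 ⟨hab.ne', Finset.mem_univ _⟩)
      · exact Or.inl (Finset.mem_erase.2 ⟨ha, Finset.mem_univ _⟩)
    · have : ({i, j} : Finset V) ∩ Finset.univ.erase j = {i} := by
        ext x
        simp only [Finset.mem_inter, Finset.mem_insert, Finset.mem_singleton,
          Finset.mem_erase, Finset.mem_univ, and_true]
        constructor
        · rintro ⟨rfl | rfl, hx⟩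
          · rfl
          · exact absurd rfl hx
        · rintro rfl
          exact ⟨Or.inl rfl, hij.ne⟩
      rw [this, Finset.card_singleton]
  obtain ⟨R, hR, hRcard⟩ := Nat.sInf_mem hAne
  obtain ⟨S, ⟨hS, hSone⟩, hScard⟩ := Nat.sInf_mem hBne
  -- δ̄ ≤ ζ + |Δ| + 1
  obtain ⟨S', ⟨hS', hS'one⟩, hS'card⟩ := exists_S_of_reducedVC hij R hR
  have hle1 : minRestrictedVC G i j ≤ zeta G i j + (DeltaSet G i j).card + 1 := by
    have : minRestrictedVC G i j ≤ S'.card :=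
      Nat.sInf_le ⟨S', ⟨hS', hS'one⟩, rfl⟩
    rw [hS'card, hRcard] at this
    exact this
  -- ζ + |Δ| + 1 ≤ δ̄
  obtain ⟨R', hR', hR'card⟩ := exists_R_of_restrictedVC hij S hS hSone
  have hle2 : zeta G i j ≤ R'.card := Nat.sInf_le ⟨R', hR', rfl⟩
  rw [hScard] at hR'card
  unfold zeta minRestrictedVC at *
  omega
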